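/- Let A = M_ψ · M_φ be the product of the two explicit 11×11 rational matrices M_ψ and M_φ. Then A has a Jordan block of size at least 3 for the eigenvalue 1; precisely, there exists a vector v ∈ ℚ^11 such that (A − I)^3 v = 0 and (A − I)^2 v ≠ 0. -/
import Mathlib


namespace Stmt11

def Mphi : Matrix (Fin 11) (Fin 11) ℚ :=
  !![3, 2, 1, 1, 1, 1, 0, 0, 0, 0, 0;
    -2, -1, -1, -1, -1, -1, 0, 0, 0, 0, 0;
    -1, -1, -1, 0, 0, 0, 0, 0, 0, 0, 0;
    -1, -1, 0, -1, 0, 0, 0, 0, 0, 0, 0;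
    -1, -1, 0, 0, -1, 0, 0, 0, 0, 0, 0;
    -1, -1, 0, 0, 0, -1, 0, 0, 0, 0, 0;
    0, 0, 0, 0, 0, 0, 1, 0, 0, 0, 0;
    0, 0, 0, 0, 0, 0, 0, 1, 0, 0, 0;
    0, 0, 0, 0, 0, 0, 0, 0, 1, 0, 0;
    0, 0, 0, 0, 0, 0, 0, 0, 0, 1, 0;
    0, 0, 0, 0, 0, 0, 0, 0, 0, 0, 1]

def Mpsi : Matrix (Fin 11) (Fin 11) ℚ :=
  !![3, 0, 0, 0, 0, 0, 2, 1, 1, 1, 1;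
    0, 1, 0, 0, 0, 0, 0, 0, 0, 0, 0;
    0, 0, 1, 0, 0, 0, 0, 0, 0, 0, 0;
    0, 0, 0, 1, 0, 0, 0, 0, 0, 0, 0;
    0, 0, 0, 0, 1, 0, 0, 0, 0, 0, 0;
    0, 0, 0, 0, 0, 1, 0, 0, 0, 0, 0;
    -2, 0, 0, 0, 0, 0, -1, -1, -1, -1, -1;
    -1, 0, 0, 0, 0, 0, -1, -1, 0, 0, 0;
    -1, 0, 0, 0, 0, 0, -1, 0, -1, 0, 0;
    -1, 0, 0, 0, 0, 0, -1, 0, 0, -1, 0;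
    -1, 0, 0, 0, 0, 0, -1, 0, 0, 0, -1]

def v0 : Fin 11 → ℚ := ![1, 0, 0, 0, 0, 0, 0, 0, 0, 0, 0]
def a1 : Fin 11 → ℚ := ![3, -2, -1, -1, -1, -1, 0, 0, 0, 0, 0]
def b1 : Fin 11 → ℚ := ![9, -2, -1, -1, -1, -1, -6, -3, -3, -3, -3]
def w1 : Fin 11 → ℚ := ![8, -2, -1, -1, -1, -1, -6, -3, -3, -3, -3]
def a2 : Fin 11 → ℚ := ![16, -10, -5, -5, -5, -5, -6, -3, -3, -3, -3]
def b2 : Fin 11 → ℚ := ![24, -10, -5, -5, -5, -5, -14, -7, -7, -7, -7]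
def w2 : Fin 11 → ℚ := ![16, -8, -4, -4, -4, -4, -8, -4, -4, -4, -4]
def a3 : Fin 11 → ℚ := ![16, -8, -4, -4, -4, -4, -8, -4, -4, -4, -4]
def b3 : Fin 11 → ℚ := ![16, -8, -4, -4, -4, -4, -8, -4, -4, -4, -4]

set_option maxHeartbeats 1000000

lemma hphi1 : Mphi.mulVec v0 = a1 := by
  funext i
  fin_cases i <;>
    norm_num [Mphi, v0, a1, Matrix.mulVec, dotProduct, Fin.sum_univ_succ]

lemma hpsi1 : Mpsi.mulVec a1 = b1 := by
  funext i
  fin_cases i <;>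
    norm_num [Mpsi, a1, b1, Matrix.mulVec, dotProduct, Fin.sum_univ_succ]

lemma hsub1 : b1 - v0 = w1 := by
  funext i
  fin_cases i <;>
    norm_num [b1, v0, w1, Pi.sub_apply]

lemma hphi2 : Mphi.mulVec w1 = a2 := by
  funext i
  fin_cases i <;>
    norm_num [Mphi, w1, a2, Matrix.mulVec, dotProduct, Fin.sum_univ_succ]

lemma hpsi2 : Mpsi.mulVec a2 = b2 := by
  funext i
  fin_cases i <;>
    norm_num [Mpsi, a2, b2, Matrix.mulVec, dotProduct, Fin.sum_univ_succ]

lemma hsub2 : b2 - w1 = w2 := by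
  funext i
  fin_cases i <;>
    norm_num [b2, w1, w2, Pi.sub_apply]

lemma hphi3 : Mphi.mulVec w2 = a3 := by
  funext i
  fin_cases i <;>
    norm_num [Mphi, w2, a3, Matrix.mulVec, dotProduct, Fin.sum_univ_succ]

lemma hpsi3 : Mpsi.mulVec a3 = b3 := by
  funext i
  fin_cases i <;>
    norm_num [Mpsi, a3, b3, Matrix.mulVec, dotProduct, Fin.sum_univ_succ]

lemma hsub3 : b3 - w2 = 0 := by
  funext i
  fin_cases i <;>
    norm_num [b3, w2, Pi.sub_apply]

lemma step (a b w w' : Fin 11 → ℚ) (h1 : Mphi.mulVec w = a) (h2 : Mpsi.mulVec a = b)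
    (h3 : b - w = w') : (Mpsi * Mphi - 1).mulVec w = w' := by
  rw [Matrix.sub_mulVec, Matrix.one_mulVec, ← Matrix.mulVec_mulVec, h1, h2, h3]

lemma hstep1 : (Mpsi * Mphi - 1).mulVec v0 = w1 := step a1 b1 v0 w1 hphi1 hpsi1 hsub1
lemma hstep2 : (Mpsi * Mphi - 1).mulVec w1 = w2 := step a2 b2 w1 w2 hphi2 hpsi2 hsub2
lemma hstep3 : (Mpsi * Mphi - 1).mulVec w2 = 0 := step a3 b3 w2 0 hphi3 hpsi3 hsub3

/-- The product `A = M_ψ · M_φ` has a Jordan block of size at least `3` for the eigenvalue `1`: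
there is a vector `v` with `(A - I)³ v = 0` but `(A - I)² v ≠ 0`. -/
theorem jordan_block_of_size_three :
    ∃ v : Fin 11 → ℚ,
      ((Mpsi * Mphi - 1) ^ 3).mulVec v = 0 ∧ ((Mpsi * Mphi - 1) ^ 2).mulVec v ≠ 0 := by
  refine ⟨v0, ?_, ?_⟩
  · rw [pow_succ, pow_two, ← Matrix.mulVec_mulVec, ← Matrix.mulVec_mulVec,
      hstep1, hstep2, hstep3]
  · rw [pow_two, ← Matrix.mulVec_mulVec, hstep1, hstep2]
    intro h
    have h0 := congrFun h 0
    simp [w2] at h0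

end Stmt11
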